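/- If M is a symmetric r×r diagonally signed matrix, then the eigenspace of the minimal eigenvalue λ_min(M) is one-dimensional and is spanned by a vector with all entries strictly positive. -/

import Mathlib

open Matrix Finset

section Aux

variable {r : ℕ} {M : Matrix (Fin r) (Fin r) ℝ}

private lemma inner_eq_dot (x y : EuclideanSpace ℝ (Fin r)) : inner ℝ x y = (x : Fin r → ℝ) ⬝ᵥ y := by
  simp [PiLp.inner_apply, dotProduct, RCLike.inner_apply, mul_comm]

private lemma symm_dot (hM : M.IsHermitian) (x y : Fin r → ℝ) :
    x ⬝ᵥ (M *ᵥ y) = (M *ᵥ x) ⬝ᵥ y := by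
  have hs : ∀ i j, M j i = M i j := fun i j => by
    have := congrFun (congrFun hM.eq i) j
    simpa [Matrix.conjTranspose_apply] using this
  simp only [dotProduct, mulVec, dotProduct, Finset.mul_sum, Finset.sum_mul]
  rw [Finset.sum_comm]
  refine Finset.sum_congr rfl fun i _ => Finset.sum_congr rfl fun j _ => ?_
  rw [hs i j]; ring

/-- Rayleigh lower bound and characterization of equality. -/
private lemma rayleigh (hr : 1 ≤ r) (hM : M.IsHermitian) (x : Fin r → ℝ) :
    (⨅ i, hM.eigenvalues i) * (x ⬝ᵥ x) ≤ x ⬝ᵥ (M *ᵥ x) ∧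
    (x ⬝ᵥ (M *ᵥ x) = (⨅ i, hM.eigenvalues i) * (x ⬝ᵥ x) →
      M *ᵥ x = (⨅ i, hM.eigenvalues i) • x) := by
  haveI : Nonempty (Fin r) := ⟨⟨0, hr⟩⟩
  set lam := ⨅ i, hM.eigenvalues i with hlam
  have hle : ∀ i, lam ≤ hM.eigenvalues i := fun i =>
    ciInf_le (Set.Finite.bddBelow (Set.finite_range _)) i
  set b := hM.eigenvectorBasis with hb
  set x' : EuclideanSpace ℝ (Fin r) := WithLp.toLp 2 x with hx'
  set c : Fin r → ℝ := fun i => inner ℝ (b i) x' with hc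
  -- inner products as sums
  have hcd : ∀ i, c i = (b i : Fin r → ℝ) ⬝ᵥ x := fun i => inner_eq_dot _ _
  have hMb : ∀ i, M *ᵥ (b i : Fin r → ℝ) = hM.eigenvalues i • (b i : Fin r → ℝ) :=
    fun i => hM.mulVec_eigenvectorBasis i
  have hiM : ∀ i, inner ℝ (b i) (WithLp.toLp 2 (M *ᵥ x : Fin r → ℝ))
      = hM.eigenvalues i * c i := by
    intro i
    rw [inner_eq_dot, WithLp.ofLp_toLp, symm_dot hM, hMb i, smul_dotProduct, hcd i, smul_eq_mul]
  have hxMx : x ⬝ᵥ (M *ᵥ x) = ∑ i, hM.eigenvalues i * (c i)^2 := by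
    have := b.sum_inner_mul_inner x' (WithLp.toLp 2 (M *ᵥ x : Fin r → ℝ))
    rw [inner_eq_dot, hx', WithLp.ofLp_toLp, WithLp.ofLp_toLp] at this
    rw [← this]
    refine Finset.sum_congr rfl fun i _ => ?_
    rw [hiM i]
    have h1 : inner ℝ x' (b i) = c i := real_inner_comm _ _
    rw [h1]; ring
  have hxx : x ⬝ᵥ x = ∑ i, (c i)^2 := by
    have := b.sum_inner_mul_inner x' x'
    rw [inner_eq_dot, hx', WithLp.ofLp_toLp] at this
    rw [← this]
    refine Finset.sum_congr rfl fun i _ => ?_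
    have h1 : inner ℝ x' (b i) = c i := real_inner_comm _ _
    rw [h1]; ring
  have hkey : x ⬝ᵥ (M *ᵥ x) - lam * (x ⬝ᵥ x) = ∑ i, (hM.eigenvalues i - lam) * (c i)^2 := by
    rw [hxMx, hxx, Finset.mul_sum, ← Finset.sum_sub_distrib]
    refine Finset.sum_congr rfl fun i _ => by ring
  have hterm : ∀ i ∈ Finset.univ, 0 ≤ (hM.eigenvalues i - lam) * (c i)^2 := fun i _ =>
    mul_nonneg (by linarith [hle i]) (sq_nonneg _)
  constructor
  · nlinarith [Finset.sum_nonneg hterm, hkey]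
  · intro heq
    have h0 : ∑ i, (hM.eigenvalues i - lam) * (c i)^2 = 0 := by
      rw [← hkey, heq]; ring
    have hall : ∀ i ∈ Finset.univ, (hM.eigenvalues i - lam) * (c i)^2 = 0 :=
      (Finset.sum_eq_zero_iff_of_nonneg hterm).1 h0
    have hci : ∀ i, hM.eigenvalues i * c i = lam * c i := by
      intro i
      have := hall i (Finset.mem_univ i)
      rcases mul_eq_zero.1 this with h | h
      · rw [show hM.eigenvalues i = lam from by linarith]
      · have : c i = 0 := by nlinarith [sq_nonneg (c i)]
        rw [this]; ring
    -- expand x in the eigenbasis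
    have hrepr : x' = ∑ i, c i • b i := (b.sum_repr' x').symm
    have hxfun : x = ∑ i, c i • (b i : Fin r → ℝ) := by
      have := congrArg (fun v : EuclideanSpace ℝ (Fin r) => (v : Fin r → ℝ)) hrepr
      simpa [hx'] using this
    calc M *ᵥ x = M.mulVecLin (∑ i, c i • (b i : Fin r → ℝ)) := by
          rw [← hxfun, Matrix.mulVecLin_apply]
      _ = ∑ i, c i • (M *ᵥ (b i : Fin r → ℝ)) := by
          rw [map_sum]; simp [Matrix.mulVecLin_apply, Matrix.mulVec_smul]
      _ = ∑ i, (hM.eigenvalues i * c i) • (b i : Fin r → ℝ) := by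
          refine Finset.sum_congr rfl fun i _ => ?_
          rw [hMb i, smul_smul, mul_comm]
      _ = ∑ i, lam • (c i • (b i : Fin r → ℝ)) := by
          refine Finset.sum_congr rfl fun i _ => ?_
          rw [hci i, smul_smul]
      _ = lam • x := by rw [← Finset.smul_sum, ← hxfun]

/-- A nonnegative eigenvector with a zero entry is zero. -/
private lemma zero_entry (hM : M.IsHermitian)
    (hoff : ∀ i j, i ≠ j → M i j < 0)
    {lam : ℝ} {z : Fin r → ℝ} (hz : M *ᵥ z = lam • z)
    (hznn : ∀ i, 0 ≤ z i) {i : Fin r} (hzi : z i = 0) : z = 0 := by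
  have h0 : ∑ j, M i j * z j = 0 := by
    have := congrFun hz i
    simpa [Matrix.mulVec, dotProduct, Pi.smul_apply, hzi] using this
  have h0' : ∑ j ∈ Finset.univ.erase i, M i j * z j = 0 := by
    rw [← Finset.add_sum_erase _ _ (Finset.mem_univ i)] at h0
    rw [hzi] at h0
    linarith [h0]
  have hterm : ∀ j ∈ Finset.univ.erase i, M i j * z j ≤ 0 := fun j hj =>
    mul_nonpos_of_nonpos_of_nonneg (le_of_lt (hoff i j (Ne.symm (Finset.mem_erase.1 hj).1))) (hznn j)
  have hall : ∀ j ∈ Finset.univ.erase i, M i j * z j = 0 :=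
    (Finset.sum_eq_zero_iff_of_nonpos hterm).1 h0'
  funext j
  by_cases hji : j = i
  · rw [hji, hzi]; rfl
  · have := hall j (Finset.mem_erase.2 ⟨hji, Finset.mem_univ j⟩)
    have hMij : M i j < 0 := hoff i j (Ne.symm hji)
    have : z j = 0 := by
      rcases mul_eq_zero.1 this with h | h
      · exact absurd h (ne_of_lt hMij)
      · exact h
    simpa using this

/-- The entrywise absolute value of an eigenvector for the minimal eigenvalue is again one. -/
private lemma abs_eigenvector (hr : 1 ≤ r) (hM : M.IsHermitian)
    (hoff : ∀ i j, i ≠ j → M i j < 0)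
    {z : Fin r → ℝ} (hz : M *ᵥ z = (⨅ i, hM.eigenvalues i) • z) :
    M *ᵥ (fun i => |z i|) = (⨅ i, hM.eigenvalues i) • (fun i => |z i|) := by
  set lam := ⨅ i, hM.eigenvalues i with hlam
  set w : Fin r → ℝ := fun i => |z i| with hw
  have hww : w ⬝ᵥ w = z ⬝ᵥ z := by
    simp [dotProduct, hw, abs_mul_abs_self]
  have hle : w ⬝ᵥ (M *ᵥ w) ≤ z ⬝ᵥ (M *ᵥ z) := by
    simp only [dotProduct, mulVec, dotProduct, Finset.mul_sum]
    refine Finset.sum_le_sum fun i _ => Finset.sum_le_sum fun j _ => ?_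
    by_cases hij : i = j
    · subst hij
      simp [hw, abs_mul_abs_self]
      have : |z i| * (M i i * |z i|) = M i i * (z i * z i) := by
        rw [show |z i| * (M i i * |z i|) = M i i * (|z i| * |z i|) by ring, abs_mul_abs_self]
      linarith [this.le]
    · have h1 : z i * z j ≤ |z i| * |z j| := by
        calc z i * z j ≤ |z i * z j| := le_abs_self _
          _ = |z i| * |z j| := abs_mul _ _
      have h2 : M i j < 0 := hoff i j hij
      show w i * (M i j * w j) ≤ z i * (M i j * z j)
      have : M i j * (|z i| * |z j|) ≤ M i j * (z i * z j) :=
        mul_le_mul_of_nonpos_left h1 h2.le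
      simp only [hw]
      nlinarith [this]
  have hzMz : z ⬝ᵥ (M *ᵥ z) = lam * (z ⬝ᵥ z) := by
    rw [hz, dotProduct_smul]
    simp [smul_eq_mul]
  have hlow := (rayleigh hr hM w).1
  have heq : w ⬝ᵥ (M *ᵥ w) = lam * (w ⬝ᵥ w) := by
    rw [hww]
    have : w ⬝ᵥ (M *ᵥ w) ≤ lam * (z ⬝ᵥ z) := by rw [← hzMz]; exact hle
    rw [hww] at hlow
    linarith
  exact (rayleigh hr hM w).2 heq

end Aux

/-- For a symmetric diagonally signed matrix `M`, the eigenspace of the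
minimal eigenvalue is one-dimensional and spanned by an entrywise strictly positive vector. -/
theorem min_eigenspace_one_dim_positive
    (r : ℕ) (hr : 1 ≤ r) (M : Matrix (Fin r) (Fin r) ℝ)
    (hM : M.IsHermitian)
    (hdiag : ∀ i, 0 ≤ M i i)
    (hoff : ∀ i j, i ≠ j → M i j < 0) :
    ∃ v : Fin r → ℝ, (∀ s, 0 < v s) ∧
      Module.End.eigenspace (Matrix.toLin' M) (⨅ i, hM.eigenvalues i)
        = Submodule.span ℝ {v} := by
  haveI : Nonempty (Fin r) := ⟨⟨0, hr⟩⟩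
  set lam := ⨅ i, hM.eigenvalues i with hlam
  obtain ⟨i₀, hi₀⟩ : ∃ i, hM.eigenvalues i = lam := by
    obtain ⟨i, hi⟩ := exists_eq_ciInf_of_finite (f := hM.eigenvalues)
    exact ⟨i, hi⟩
  set u : Fin r → ℝ := (hM.eigenvectorBasis i₀ : Fin r → ℝ) with hu
  have huev : M *ᵥ u = lam • u := by
    have h := hM.mulVec_eigenvectorBasis i₀
    rw [hi₀] at h
    exact h
  have hune : u ≠ 0 := by
    intro h
    exact hM.eigenvectorBasis.orthonormal.ne_zero i₀ (by ext j; exact congrFun h j)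
  set w : Fin r → ℝ := fun i => |u i| with hw
  have hwev : M *ᵥ w = lam • w := abs_eigenvector hr hM hoff huev
  have hwnn : ∀ i, 0 ≤ w i := fun i => abs_nonneg _
  have hwpos : ∀ s, 0 < w s := by
    intro s
    rcases lt_or_eq_of_le (hwnn s) with h | h
    · exact h
    · exfalso
      have hz : w = 0 := zero_entry hM hoff hwev hwnn h.symm
      apply hune
      funext j
      have : |u j| = 0 := congrFun hz j
      simpa using this
  refine ⟨w, hwpos, ?_⟩
  ext x
  rw [Module.End.mem_eigenspace_iff, Submodule.mem_span_singleton]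
  constructor
  · intro hx
    have hx' : M *ᵥ x = lam • x := by rwa [Matrix.toLin'_apply] at hx
    set k : Fin r := ⟨0, hr⟩
    set cc : ℝ := x k / w k with hcc
    set y : Fin r → ℝ := x - cc • w with hy
    have hyev : M *ᵥ y = lam • y := by
      rw [hy, Matrix.mulVec_sub, Matrix.mulVec_smul, hx', hwev, smul_sub, smul_comm]
    have hyk : y k = 0 := by
      have hwk : w k ≠ 0 := ne_of_gt (hwpos k)
      simp only [hy, Pi.sub_apply, Pi.smul_apply, smul_eq_mul, hcc]
      field_simp
      ring
    have hay : M *ᵥ (fun i => |y i|) = lam • (fun i => |y i|) :=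
      abs_eigenvector hr hM hoff hyev
    have hayz : (fun i => |y i|) = 0 :=
      zero_entry hM hoff hay (fun i => abs_nonneg _) (i := k) (by simp [hyk])
    have hy0 : y = 0 := by
      funext j
      have : |y j| = 0 := congrFun hayz j
      simpa using this
    refine ⟨cc, ?_⟩
    have := sub_eq_zero.1 (hy0 ▸ rfl : x - cc • w = 0)
    exact this.symm
  · rintro ⟨a, rfl⟩
    rw [Matrix.toLin'_apply, Matrix.mulVec_smul, hwev, smul_comm]
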